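/- Let H be a Hopf algebra over a field k with bijective antipode σ. Then F_r(H) = σ(F_l(H)), where F_l(H) and F_r(H) are the left and right locally finite parts of H. -/

import Mathlib

open scoped TensorProduct
open TensorProduct Coalgebra

section Conv
variable {k : Type*} [CommSemiring k]
variable {C : Type*} [AddCommMonoid C] [Module k C]
variable {A : Type*} [Semiring A] [Algebra k A]

noncomputable def cv (D : C →ₗ[k] C ⊗[k] C) (f g : C →ₗ[k] A) : C →ₗ[k] A :=
  LinearMap.mul' k A ∘ₗ TensorProduct.map f g ∘ₗ D

noncomputable def ce (E : C →ₗ[k] k) : C →ₗ[k] A := Algebra.linearMap k A ∘ₗ E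

lemma ce_apply (E : C →ₗ[k] k) (c : C) : (ce (A := A) E) c = algebraMap k A (E c) := rfl

lemma cv_apply_of_eq (D : C →ₗ[k] C ⊗[k] C) (f g : C →ₗ[k] A) (c : C)
    {ι : Type*} (s : Finset ι) (x y : ι → C) (h : D c = ∑ i ∈ s, x i ⊗ₜ[k] y i) :
    cv D f g c = ∑ i ∈ s, f (x i) * g (y i) := by
  simp [cv, h, LinearMap.mul'_apply]

lemma cv_assoc (D : C →ₗ[k] C ⊗[k] C)
    (hD : ∀ c : C, TensorProduct.assoc k C C C (D.rTensor C (D c)) = D.lTensor C (D c))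
    (f g h : C →ₗ[k] A) : cv D (cv D f g) h = cv D f (cv D g h) := by
  ext c
  obtain ⟨s, hs⟩ := TensorProduct.exists_finset (R := k) (D c)
  set Θ : C ⊗[k] (C ⊗[k] C) →ₗ[k] A :=
    LinearMap.mul' k A ∘ₗ TensorProduct.map f (LinearMap.mul' k A ∘ₗ TensorProduct.map g h)
    with hΘ
  have hΘ' : ∀ x y z : C, Θ (x ⊗ₜ (y ⊗ₜ z)) = f x * (g y * h z) := by
    intro x y z; simp [hΘ, LinearMap.mul'_apply]
  have key : cv D (cv D f g) h c = Θ (TensorProduct.assoc k C C C (D.rTensor C (D c))) := by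
    rw [cv_apply_of_eq D _ h c s (fun i => i.1) (fun i => i.2) (by simpa using hs), hs]
    rw [map_sum, map_sum, map_sum]
    refine Finset.sum_congr rfl fun i _ => ?_
    obtain ⟨si, hsi⟩ := TensorProduct.exists_finset (R := k) (D i.1)
    rw [cv_apply_of_eq D f g i.1 si (fun j => j.1) (fun j => j.2) (by simpa using hsi),
      LinearMap.rTensor_tmul, hsi]
    rw [TensorProduct.sum_tmul, map_sum, map_sum, Finset.sum_mul]
    exact Finset.sum_congr rfl fun j _ => by rw [TensorProduct.assoc_tmul, hΘ', mul_assoc]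
  have key2 : cv D f (cv D g h) c = Θ (D.lTensor C (D c)) := by
    rw [cv_apply_of_eq D f _ c s (fun i => i.1) (fun i => i.2) (by simpa using hs), hs]
    rw [map_sum, map_sum]
    refine Finset.sum_congr rfl fun i _ => ?_
    obtain ⟨si, hsi⟩ := TensorProduct.exists_finset (R := k) (D i.2)
    rw [cv_apply_of_eq D g h i.2 si (fun j => j.1) (fun j => j.2) (by simpa using hsi),
      LinearMap.lTensor_tmul, hsi, TensorProduct.tmul_sum, map_sum, Finset.mul_sum]
    exact Finset.sum_congr rfl fun j _ => (hΘ' _ _ _).symm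
  rw [key, key2, hD]

lemma cv_unit_left (D : C →ₗ[k] C ⊗[k] C) (E : C →ₗ[k] k)
    (hE : ∀ c : C, E.rTensor C (D c) = 1 ⊗ₜ[k] c) (f : C →ₗ[k] A) :
    cv D (ce E) f = f := by
  ext c
  obtain ⟨s, hs⟩ := TensorProduct.exists_finset (R := k) (D c)
  rw [cv_apply_of_eq D _ f c s (fun i => i.1) (fun i => i.2) (by simpa using hs)]
  have h2 : ∑ i ∈ s, E i.1 • i.2 = c := by
    have := hE c
    rw [hs, map_sum] at this
    simpa [LinearMap.rTensor_tmul] using congrArg (TensorProduct.lid k C) this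
  calc ∑ i ∈ s, (ce (A := A) E) i.1 * f i.2 = ∑ i ∈ s, f (E i.1 • i.2) := by
        refine Finset.sum_congr rfl fun i _ => ?_
        simp [ce, Algebra.smul_def]
    _ = f c := by rw [← map_sum, h2]

lemma cv_unit_right (D : C →ₗ[k] C ⊗[k] C) (E : C →ₗ[k] k)
    (hE : ∀ c : C, E.lTensor C (D c) = c ⊗ₜ[k] 1) (f : C →ₗ[k] A) :
    cv D f (ce E) = f := by
  ext c
  obtain ⟨s, hs⟩ := TensorProduct.exists_finset (R := k) (D c)
  rw [cv_apply_of_eq D f _ c s (fun i => i.1) (fun i => i.2) (by simpa using hs)]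
  have h2 : ∑ i ∈ s, E i.2 • i.1 = c := by
    have := hE c
    rw [hs, map_sum] at this
    simpa [LinearMap.lTensor_tmul] using congrArg (TensorProduct.rid k C) this
  calc ∑ i ∈ s, f i.1 * (ce (A := A) E) i.2 = ∑ i ∈ s, f (E i.2 • i.1) := by
        refine Finset.sum_congr rfl fun i _ => ?_
        simp [ce, Algebra.smul_def, Algebra.commutes, mul_smul_comm, smul_mul_assoc]
    _ = f c := by rw [← map_sum, h2]

end Conv

section Conv
variable {k : Type*} [CommSemiring k]
variable {C : Type*} [AddCommMonoid C] [Module k C]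
variable {A : Type*} [Semiring A] [Algebra k A]

lemma cv_inv_unique (D : C →ₗ[k] C ⊗[k] C) (E : C →ₗ[k] k)
    (hD : ∀ c : C, TensorProduct.assoc k C C C (D.rTensor C (D c)) = D.lTensor C (D c))
    (hE1 : ∀ c : C, E.rTensor C (D c) = 1 ⊗ₜ[k] c)
    (hE2 : ∀ c : C, E.lTensor C (D c) = c ⊗ₜ[k] 1)
    {f x y : C →ₗ[k] A} (hx : cv D x f = ce E) (hy : cv D f y = ce E) : x = y := by
  have h1 : cv D x (cv D f y) = x := by rw [hy, cv_unit_right D E hE2]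
  have h2 : cv D (cv D x f) y = y := by rw [hx, cv_unit_left D E hE1]
  rw [← h1, ← cv_assoc D hD, h2]

end Conv

section Hopf
variable {k : Type*} {H : Type*} [CommSemiring k] [Semiring H] [HopfAlgebra k H]

local notation "σ" => HopfAlgebra.antipode (R := k) (A := H)
local notation "Δ" => Coalgebra.comul (R := k) (A := H)
local notation "ε" => Coalgebra.counit (R := k) (A := H)

lemma hD_comul : ∀ c : H, TensorProduct.assoc k H H H ((Δ).rTensor H (Δ c)) = (Δ).lTensor H (Δ c) :=
  Coalgebra.coassoc_apply

lemma hE1_comul : ∀ c : H, (ε).rTensor H (Δ c) = 1 ⊗ₜ[k] c := Coalgebra.rTensor_counit_comul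

lemma hE2_comul : ∀ c : H, (ε).lTensor H (Δ c) = c ⊗ₜ[k] 1 := Coalgebra.lTensor_counit_comul

lemma cv_antipode_id : cv Δ (σ) LinearMap.id = ce ε := by
  ext c
  have : TensorProduct.map (σ) (LinearMap.id (R := k) (M := H)) = (σ).rTensor H := rfl
  simp [cv, ce, this]

lemma cv_id_antipode : cv Δ LinearMap.id (σ) = ce ε := by
  ext c
  have : TensorProduct.map (LinearMap.id (R := k) (M := H)) (σ) = (σ).lTensor H := rfl
  simp [cv, ce, this]

end Hopf


section Hopf2
variable {k : Type*} {H : Type*} [CommSemiring k] [Semiring H] [Bialgebra k H]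

/-- comultiplication on `H ⊗ H` -/
noncomputable def D2 (k H : Type*) [CommSemiring k] [Semiring H] [Bialgebra k H] :
    H ⊗[k] H →ₗ[k] (H ⊗[k] H) ⊗[k] (H ⊗[k] H) :=
  (TensorProduct.tensorTensorTensorComm k H H H H).toLinearMap ∘ₗ
    TensorProduct.map (Coalgebra.comul) (Coalgebra.comul)

/-- counit on `H ⊗ H` -/
noncomputable def E2 (k H : Type*) [CommSemiring k] [Semiring H] [Bialgebra k H] :
    H ⊗[k] H →ₗ[k] k :=
  LinearMap.mul' k k ∘ₗ TensorProduct.map (Coalgebra.counit) (Coalgebra.counit)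

lemma D2_tmul {a b : H} {ι κ : Type*} (ra : Coalgebra.Repr k a ι) (rb : Coalgebra.Repr k b κ) :
    D2 k H (a ⊗ₜ[k] b) = ∑ p ∈ ra.index ×ˢ rb.index,
      (ra.left p.1 ⊗ₜ[k] rb.left p.2) ⊗ₜ[k] (ra.right p.1 ⊗ₜ[k] rb.right p.2) := by
  simp [D2, ← ra.eq, ← rb.eq, TensorProduct.sum_tmul, TensorProduct.tmul_sum,
    Finset.sum_product, tensorTensorTensorComm_tmul]
  rw [Finset.sum_comm]

lemma E2_tmul (a b : H) : E2 k H (a ⊗ₜ[k] b) =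
    Coalgebra.counit (R := k) a * Coalgebra.counit (R := k) b := by
  simp [E2, LinearMap.mul'_apply]

lemma sum_counit_smul {a : H} {ι : Type*} (r : Coalgebra.Repr k a ι) :
    ∑ i ∈ r.index, Coalgebra.counit (R := k) (r.left i) • r.right i = a := by
  have h := congrArg (TensorProduct.lid k H) (Coalgebra.sum_counit_tmul_eq r)
  simp only [map_sum, TensorProduct.lid_tmul, one_smul] at h
  exact h

lemma sum_smul_counit {a : H} {ι : Type*} (r : Coalgebra.Repr k a ι) :
    ∑ i ∈ r.index, Coalgebra.counit (R := k) (r.right i) • r.left i = a := by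
  have h := congrArg (TensorProduct.rid k H) (Coalgebra.sum_tmul_counit_eq r)
  simp only [map_sum, TensorProduct.rid_tmul, one_smul] at h
  exact h

lemma hE1_D2 : ∀ c : H ⊗[k] H, (E2 k H).rTensor _ (D2 k H c) = 1 ⊗ₜ[k] c := by
  intro c
  induction c with
  | zero => simp
  | add x y hx hy => rw [map_add, map_add, hx, hy, TensorProduct.tmul_add]
  | tmul a b =>
    set ra := ℛ k a; set rb := ℛ k b
    rw [D2_tmul ra rb, map_sum]
    apply (TensorProduct.lid k (H ⊗[k] H)).injective
    simp only [LinearMap.rTensor_tmul, E2_tmul, map_sum, lid_tmul]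
    calc ∑ p ∈ ra.index ×ˢ rb.index,
          (Coalgebra.counit (R := k) (ra.left p.1) * Coalgebra.counit (R := k) (rb.left p.2)) •
            (ra.right p.1 ⊗ₜ[k] rb.right p.2)
        = (∑ i ∈ ra.index, Coalgebra.counit (R := k) (ra.left i) • ra.right i) ⊗ₜ[k]
            (∑ j ∈ rb.index, Coalgebra.counit (R := k) (rb.left j) • rb.right j) := by
          rw [TensorProduct.sum_tmul, Finset.sum_product]
          refine Finset.sum_congr rfl fun i _ => ?_
          rw [TensorProduct.tmul_sum]
          refine Finset.sum_congr rfl fun j _ => ?_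
          rw [mul_smul, TensorProduct.smul_tmul', TensorProduct.smul_tmul,
            TensorProduct.smul_tmul']
      _ = a ⊗ₜ[k] b := by rw [_root_.sum_counit_smul, _root_.sum_counit_smul]
      _ = (TensorProduct.lid k (H ⊗[k] H)) (1 ⊗ₜ[k] (a ⊗ₜ[k] b)) := by simp

lemma hE2_D2 : ∀ c : H ⊗[k] H, (E2 k H).lTensor _ (D2 k H c) = c ⊗ₜ[k] 1 := by
  intro c
  induction c with
  | zero => simp
  | add x y hx hy => rw [map_add, map_add, hx, hy, TensorProduct.add_tmul]
  | tmul a b =>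
    set ra := ℛ k a; set rb := ℛ k b
    rw [D2_tmul ra rb, map_sum]
    apply (TensorProduct.rid k (H ⊗[k] H)).injective
    simp only [LinearMap.lTensor_tmul, E2_tmul, map_sum, rid_tmul]
    calc ∑ p ∈ ra.index ×ˢ rb.index,
          (Coalgebra.counit (R := k) (ra.right p.1) * Coalgebra.counit (R := k) (rb.right p.2)) •
            (ra.left p.1 ⊗ₜ[k] rb.left p.2)
        = (∑ i ∈ ra.index, Coalgebra.counit (R := k) (ra.right i) • ra.left i) ⊗ₜ[k]
            (∑ j ∈ rb.index, Coalgebra.counit (R := k) (rb.right j) • rb.left j) := by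
          rw [TensorProduct.sum_tmul, Finset.sum_product]
          refine Finset.sum_congr rfl fun i _ => ?_
          rw [TensorProduct.tmul_sum]
          refine Finset.sum_congr rfl fun j _ => ?_
          rw [mul_smul, TensorProduct.smul_tmul', TensorProduct.smul_tmul,
            TensorProduct.smul_tmul']
      _ = a ⊗ₜ[k] b := by rw [sum_smul_counit, sum_smul_counit]
      _ = (TensorProduct.rid k (H ⊗[k] H)) ((a ⊗ₜ[k] b) ⊗ₜ[k] 1) := by simp


lemma hD_D2 : ∀ c : H ⊗[k] H,
    TensorProduct.assoc k (H ⊗[k] H) (H ⊗[k] H) (H ⊗[k] H)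
        ((D2 k H).rTensor _ (D2 k H c)) = (D2 k H).lTensor _ (D2 k H c) := by
  intro c
  induction c with
  | zero => simp
  | add x y hx hy => rw [map_add, map_add, map_add, map_add, hx, hy]
  | tmul a b =>
    set ra := ℛ k a with hra
    set rb := ℛ k b with hrb
    set rla : (i : H × H) → Coalgebra.Repr k (ra.left i) (H × H) := fun i => ℛ k (ra.left i)
    set rra : (i : H × H) → Coalgebra.Repr k (ra.right i) (H × H) := fun i => ℛ k (ra.right i)
    set rlb : (j : H × H) → Coalgebra.Repr k (rb.left j) (H × H) := fun j => ℛ k (rb.left j)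
    set rrb : (j : H × H) → Coalgebra.Repr k (rb.right j) (H × H) := fun j => ℛ k (rb.right j)
    set Ψ : (H ⊗[k] (H ⊗[k] H)) ⊗[k] (H ⊗[k] (H ⊗[k] H)) →ₗ[k]
        (H ⊗[k] H) ⊗[k] ((H ⊗[k] H) ⊗[k] (H ⊗[k] H)) :=
      (TensorProduct.map LinearMap.id
          (TensorProduct.tensorTensorTensorComm k H H H H).toLinearMap) ∘ₗ
        (TensorProduct.tensorTensorTensorComm k H (H ⊗[k] H) H (H ⊗[k] H)).toLinearMap
      with hΨdef
    have hΨ : ∀ x y z u v w : H,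
        Ψ ((x ⊗ₜ[k] (y ⊗ₜ[k] z)) ⊗ₜ[k] (u ⊗ₜ[k] (v ⊗ₜ[k] w))) =
          (x ⊗ₜ[k] u) ⊗ₜ[k] ((y ⊗ₜ[k] v) ⊗ₜ[k] (z ⊗ₜ[k] w)) := by
      intro x y z u v w
      simp [hΨdef, tensorTensorTensorComm_tmul]
    have lhs_eq :
        TensorProduct.assoc k (H ⊗[k] H) (H ⊗[k] H) (H ⊗[k] H)
            ((D2 k H).rTensor _ (D2 k H (a ⊗ₜ[k] b))) =
          Ψ ((∑ i ∈ ra.index, ∑ p ∈ (rla i).index,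
                (rla i).left p ⊗ₜ[k] ((rla i).right p ⊗ₜ[k] ra.right i)) ⊗ₜ[k]
             (∑ j ∈ rb.index, ∑ q ∈ (rlb j).index,
                (rlb j).left q ⊗ₜ[k] ((rlb j).right q ⊗ₜ[k] rb.right j))) := by
      rw [D2_tmul ra rb, map_sum, map_sum, TensorProduct.sum_tmul, map_sum,
        Finset.sum_product]
      refine Finset.sum_congr rfl fun i _ => ?_
      rw [TensorProduct.tmul_sum, map_sum]
      refine Finset.sum_congr rfl fun j _ => ?_
      rw [LinearMap.rTensor_tmul, D2_tmul (rla i) (rlb j)]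
      simp only [TensorProduct.sum_tmul, TensorProduct.tmul_sum, map_sum,
        TensorProduct.assoc_tmul, hΨ, Finset.sum_product]
      rw [Finset.sum_comm]
    have rhs_eq :
        (D2 k H).lTensor _ (D2 k H (a ⊗ₜ[k] b)) =
          Ψ ((∑ i ∈ ra.index, ∑ m ∈ (rra i).index,
                ra.left i ⊗ₜ[k] ((rra i).left m ⊗ₜ[k] (rra i).right m)) ⊗ₜ[k]
             (∑ j ∈ rb.index, ∑ q ∈ (rrb j).index,
                rb.left j ⊗ₜ[k] ((rrb j).left q ⊗ₜ[k] (rrb j).right q))) := by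
      rw [D2_tmul ra rb, map_sum, TensorProduct.sum_tmul, map_sum, Finset.sum_product]
      refine Finset.sum_congr rfl fun i _ => ?_
      rw [TensorProduct.tmul_sum, map_sum]
      refine Finset.sum_congr rfl fun j _ => ?_
      rw [LinearMap.lTensor_tmul, D2_tmul (rra i) (rrb j)]
      simp only [TensorProduct.sum_tmul, TensorProduct.tmul_sum, map_sum, hΨ,
        Finset.sum_product]
      rw [Finset.sum_comm]
    rw [lhs_eq, rhs_eq, Coalgebra.sum_tmul_tmul_eq ra rla rra,
      Coalgebra.sum_tmul_tmul_eq rb rlb rrb]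

end Hopf2

section AntiMul
variable {k : Type*} {H : Type*} [CommSemiring k] [Semiring H] [HopfAlgebra k H]

local notation "σ" => HopfAlgebra.antipode (R := k) (A := H)

/-- A representation of `a * b` from representations of `a` and `b`. -/
noncomputable def mulRepr {a b : H} {ι κ : Type*} (ra : Coalgebra.Repr k a ι)
    (rb : Coalgebra.Repr k b κ) :
    Coalgebra.Repr k (a * b) (ι × κ) where
  index := ra.index ×ˢ rb.index
  left := fun p => ra.left p.1 * rb.left p.2
  right := fun p => ra.right p.1 * rb.right p.2
  eq := by
    rw [Bialgebra.comul_mul, ← ra.eq, ← rb.eq, Finset.sum_mul_sum]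
    rw [Finset.sum_product]
    exact Finset.sum_congr rfl fun i _ => Finset.sum_congr rfl fun j _ =>
      (Algebra.TensorProduct.tmul_mul_tmul _ _ _ _).symm

lemma cv_T_mul :
    cv (D2 k H) (LinearMap.mul' k H ∘ₗ TensorProduct.map (σ) (σ) ∘ₗ
        (TensorProduct.comm k H H).toLinearMap) (LinearMap.mul' k H) = ce (E2 k H) := by
  apply LinearMap.ext
  intro c
  induction c with
  | zero => simp
  | add x y hx hy => rw [map_add, map_add, hx, hy]
  | tmul a b =>
    set ra := ℛ k a
    set rb := ℛ k b
    rw [cv_apply_of_eq (D2 k H) _ _ _ _ _ _ (D2_tmul ra rb), ce_apply, E2_tmul]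
    have : ∀ p ∈ ra.index ×ˢ rb.index,
        (LinearMap.mul' k H ∘ₗ TensorProduct.map (σ) (σ) ∘ₗ
          (TensorProduct.comm k H H).toLinearMap) (ra.left p.1 ⊗ₜ[k] rb.left p.2) *
          LinearMap.mul' k H (ra.right p.1 ⊗ₜ[k] rb.right p.2) =
        σ (rb.left p.2) * ((σ (ra.left p.1) * ra.right p.1) * rb.right p.2) := by
      intro p _
      simp only [LinearMap.comp_apply, LinearEquiv.coe_coe, TensorProduct.comm_tmul,
        TensorProduct.map_tmul, LinearMap.mul'_apply]
      rw [mul_assoc, mul_assoc]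
    rw [Finset.sum_congr rfl this, Finset.sum_product, Finset.sum_comm]
    have step : ∀ j ∈ rb.index, ∑ i ∈ ra.index,
        σ (rb.left j) * ((σ (ra.left i) * ra.right i) * rb.right j) =
        Coalgebra.counit (R := k) a • (σ (rb.left j) * rb.right j) := by
      intro j _
      rw [← Finset.mul_sum, ← Finset.sum_mul, HopfAlgebra.sum_antipode_mul_eq_algebraMap_counit ra,
        ← Algebra.smul_def, mul_smul_comm]
    rw [Finset.sum_congr rfl step, ← Finset.smul_sum, HopfAlgebra.sum_antipode_mul_eq_algebraMap_counit rb,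
      Algebra.smul_def, ← map_mul]

lemma cv_mul_antipodeMul :
    cv (D2 k H) (LinearMap.mul' k H)
      ((σ) ∘ₗ LinearMap.mul' k H) = ce (E2 k H) := by
  apply LinearMap.ext
  intro c
  induction c with
  | zero => simp
  | add x y hx hy => rw [map_add, map_add, hx, hy]
  | tmul a b =>
    set ra := ℛ k a
    set rb := ℛ k b
    rw [cv_apply_of_eq (D2 k H) _ _ _ _ _ _ (D2_tmul ra rb), ce_apply, E2_tmul]
    have := HopfAlgebra.sum_mul_antipode_eq_algebraMap_counit (R := k) (mulRepr ra rb)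
    simp only [mulRepr] at this
    rw [← Bialgebra.counit_mul (R := k) a b]
    rw [← this]
    exact Finset.sum_congr rfl fun p _ => by
      simp [LinearMap.mul'_apply]

/-- The antipode is anti-multiplicative. -/
lemma antipode_anti_mul (a b : H) : σ (a * b) = σ b * σ a := by
  have h := cv_inv_unique (D2 k H) (E2 k H) hD_D2 hE1_D2 hE2_D2
    (f := LinearMap.mul' k H) cv_T_mul cv_mul_antipodeMul
  have := congrArg (fun f : H ⊗[k] H →ₗ[k] H => f (a ⊗ₜ[k] b)) h
  simpa [LinearMap.mul'_apply] using this.symm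

end AntiMul

section AntiComul
variable {k : Type*} {H : Type*} [CommSemiring k] [Semiring H] [HopfAlgebra k H]

local notation "σ" => HopfAlgebra.antipode (R := k) (A := H)
local notation "Δ" => Coalgebra.comul (R := k) (A := H)
local notation "ε" => Coalgebra.counit (R := k) (A := H)

noncomputable def Wmap (k H : Type*) [CommSemiring k] [Semiring H] [HopfAlgebra k H] :
    H →ₗ[k] H ⊗[k] H :=
  TensorProduct.map (HopfAlgebra.antipode (R := k)) (HopfAlgebra.antipode (R := k)) ∘ₗ
    (TensorProduct.comm k H H).toLinearMap ∘ₗ Coalgebra.comul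

lemma cv_comul_comulAntipode :
    cv (Δ) (Δ) ((Coalgebra.comul (R := k) (A := H)) ∘ₗ (σ)) = ce (ε) := by
  apply LinearMap.ext
  intro a
  set ra := ℛ k a
  rw [cv_apply_of_eq (Δ) _ _ a ra.index ra.left ra.right ra.eq.symm, ce_apply]
  calc ∑ i ∈ ra.index, Δ (ra.left i) * ((Δ ∘ₗ (σ)) (ra.right i))
      = ∑ i ∈ ra.index, Δ (ra.left i * σ (ra.right i)) := by
        exact Finset.sum_congr rfl fun i _ => by
          rw [LinearMap.comp_apply, ← Bialgebra.comul_mul]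
    _ = Δ (∑ i ∈ ra.index, ra.left i * σ (ra.right i)) := by rw [map_sum]
    _ = Δ (algebraMap k H (ε a)) := by rw [HopfAlgebra.sum_mul_antipode_eq_algebraMap_counit ra]
    _ = algebraMap k (H ⊗[k] H) (ε a) := (Bialgebra.comulAlgHom k H).commutes _

lemma cv_W_comul : cv (Δ) (Wmap k H) (Δ) = ce (ε) := by
  apply LinearMap.ext
  intro a
  set ra := ℛ k a with hra
  set rl : (i : H × H) → Coalgebra.Repr k (ra.left i) (H × H) := fun i => ℛ k (ra.left i) with hrl
  set rp : (i : H × H) → (j : H × H) → Coalgebra.Repr k ((rl i).left j) (H × H) :=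
    fun i j => ℛ k ((rl i).left j) with hrp
  set rq : (i : H × H) → (j : H × H) → Coalgebra.Repr k ((rl i).right j) (H × H) :=
    fun i j => ℛ k ((rl i).right j) with hrq
  set S : H ⊗[k] (H ⊗[k] H) →ₗ[k] H ⊗[k] H :=
    LinearMap.mul' k (H ⊗[k] H) ∘ₗ TensorProduct.map (Wmap k H) LinearMap.id with hSdef
  have hS : ∀ (x : H) (t : H ⊗[k] H), S (x ⊗ₜ[k] t) = Wmap k H x * t := by
    intro x t; simp [hSdef, LinearMap.mul'_apply]
  have hW : ∀ (x : H) (r : Coalgebra.Repr k x (H × H)),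
      Wmap k H x = ∑ p ∈ r.index, σ (r.right p) ⊗ₜ[k] σ (r.left p) := by
    intro x r
    rw [Wmap, LinearMap.comp_apply, LinearMap.comp_apply, ← r.eq]
    simp
  set A1 : H ⊗[k] (H ⊗[k] H) →ₗ[k] H ⊗[k] H :=
    TensorProduct.map (σ) (LinearMap.mul' k H ∘ₗ (σ).rTensor H) with hA1def
  set U : (H ⊗[k] (H ⊗[k] H)) ⊗[k] H →ₗ[k] H ⊗[k] H :=
    (TensorProduct.map LinearMap.id (LinearMap.mul' k H)) ∘ₗ
      (TensorProduct.assoc k H H H).toLinearMap ∘ₗ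
      (TensorProduct.map (TensorProduct.comm k H H).toLinearMap LinearMap.id) ∘ₗ
      (TensorProduct.map A1 LinearMap.id) with hUdef
  have hU : ∀ x y z w : H, U ((x ⊗ₜ[k] (y ⊗ₜ[k] z)) ⊗ₜ[k] w) =
      (σ y * z) ⊗ₜ[k] (σ x * w) := by
    intro x y z w
    simp [hUdef, hA1def, LinearMap.mul'_apply]
  rw [cv_apply_of_eq (Δ) _ _ a ra.index ra.left ra.right ra.eq.symm, ce_apply]
  calc ∑ i ∈ ra.index, Wmap k H (ra.left i) * (Δ (ra.right i))
      = S ((Δ).lTensor H (Δ a)) := by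
        rw [← ra.eq, map_sum, map_sum]
        exact Finset.sum_congr rfl fun i _ => by rw [LinearMap.lTensor_tmul, hS]
    _ = S (TensorProduct.assoc k H H H ((Δ).rTensor H (Δ a))) := by
        rw [Coalgebra.coassoc_apply]
    _ = ∑ i ∈ ra.index, ∑ j ∈ (rl i).index,
          Wmap k H ((rl i).left j) * ((rl i).right j ⊗ₜ[k] ra.right i) := by
        rw [← ra.eq, map_sum, map_sum, map_sum]
        refine Finset.sum_congr rfl fun i _ => ?_
        rw [LinearMap.rTensor_tmul, ← (rl i).eq, TensorProduct.sum_tmul, map_sum, map_sum]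
        exact Finset.sum_congr rfl fun j _ => by rw [TensorProduct.assoc_tmul, hS]
    _ = ∑ i ∈ ra.index, U ((∑ j ∈ (rl i).index, ∑ p ∈ (rp i j).index,
          (rp i j).left p ⊗ₜ[k] ((rp i j).right p ⊗ₜ[k] (rl i).right j)) ⊗ₜ[k] ra.right i) := by
        refine Finset.sum_congr rfl fun i _ => ?_
        rw [TensorProduct.sum_tmul, map_sum]
        refine Finset.sum_congr rfl fun j _ => ?_
        rw [TensorProduct.sum_tmul, map_sum]
        rw [hW ((rl i).left j) (rp i j), Finset.sum_mul]
        exact Finset.sum_congr rfl fun p _ => by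
          rw [hU, Algebra.TensorProduct.tmul_mul_tmul]
    _ = ∑ i ∈ ra.index, U ((∑ j ∈ (rl i).index, ∑ m ∈ (rq i j).index,
          (rl i).left j ⊗ₜ[k] ((rq i j).left m ⊗ₜ[k] (rq i j).right m)) ⊗ₜ[k] ra.right i) := by
        refine Finset.sum_congr rfl fun i _ => ?_
        rw [Coalgebra.sum_tmul_tmul_eq (rl i) (rp i) (rq i)]
    _ = ∑ i ∈ ra.index, ∑ j ∈ (rl i).index,
          (algebraMap k H (ε ((rl i).right j))) ⊗ₜ[k] (σ ((rl i).left j) * ra.right i) := by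
        refine Finset.sum_congr rfl fun i _ => ?_
        rw [TensorProduct.sum_tmul, map_sum]
        refine Finset.sum_congr rfl fun j _ => ?_
        rw [TensorProduct.sum_tmul, map_sum]
        calc ∑ m ∈ (rq i j).index, U (((rl i).left j ⊗ₜ[k]
              ((rq i j).left m ⊗ₜ[k] (rq i j).right m)) ⊗ₜ[k] ra.right i)
            = ∑ m ∈ (rq i j).index, (σ ((rq i j).left m) * (rq i j).right m) ⊗ₜ[k]
                (σ ((rl i).left j) * ra.right i) := by
              exact Finset.sum_congr rfl fun m _ => hU _ _ _ _
          _ = (∑ m ∈ (rq i j).index, σ ((rq i j).left m) * (rq i j).right m) ⊗ₜ[k]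
                (σ ((rl i).left j) * ra.right i) := by rw [TensorProduct.sum_tmul]
          _ = (algebraMap k H (ε ((rl i).right j))) ⊗ₜ[k]
                (σ ((rl i).left j) * ra.right i) := by
              rw [HopfAlgebra.sum_antipode_mul_eq_algebraMap_counit (rq i j)]
    _ = ∑ i ∈ ra.index, (1 : H) ⊗ₜ[k] (σ (ra.left i) * ra.right i) := by
        refine Finset.sum_congr rfl fun i _ => ?_
        calc ∑ j ∈ (rl i).index,
              (algebraMap k H (ε ((rl i).right j))) ⊗ₜ[k] (σ ((rl i).left j) * ra.right i)
            = ∑ j ∈ (rl i).index,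
              (1 : H) ⊗ₜ[k] ((ε ((rl i).right j) • σ ((rl i).left j)) * ra.right i) := by
              refine Finset.sum_congr rfl fun j _ => ?_
              rw [Algebra.algebraMap_eq_smul_one, TensorProduct.smul_tmul, smul_mul_assoc]
          _ = (1 : H) ⊗ₜ[k] ((∑ j ∈ (rl i).index, ε ((rl i).right j) • σ ((rl i).left j))
                * ra.right i) := by
              rw [← TensorProduct.tmul_sum, Finset.sum_mul]
          _ = (1 : H) ⊗ₜ[k] (σ (ra.left i) * ra.right i) := by
              have hs : (∑ j ∈ (rl i).index, ε ((rl i).right j) • σ ((rl i).left j))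
                  = σ (ra.left i) := by
                calc ∑ j ∈ (rl i).index, ε ((rl i).right j) • σ ((rl i).left j)
                    = σ (∑ j ∈ (rl i).index, ε ((rl i).right j) • (rl i).left j) := by
                      rw [map_sum]
                      exact Finset.sum_congr rfl fun j _ => (map_smul _ _ _).symm
                  _ = σ (ra.left i) := congrArg _ (sum_smul_counit (rl i))
              rw [hs]
    _ = (1 : H) ⊗ₜ[k] (algebraMap k H (ε a)) := by
        rw [← TensorProduct.tmul_sum, HopfAlgebra.sum_antipode_mul_eq_algebraMap_counit ra]
    _ = algebraMap k (H ⊗[k] H) (ε a) := by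
        rw [Algebra.algebraMap_eq_smul_one (R := k) (A := H), TensorProduct.tmul_smul,
          ← Algebra.TensorProduct.one_def, ← Algebra.algebraMap_eq_smul_one]

end AntiComul

section Conclusions
variable {k : Type*} {H : Type*} [CommSemiring k] [Semiring H] [HopfAlgebra k H]

local notation "σ" => HopfAlgebra.antipode (R := k) (A := H)
local notation "Δ" => Coalgebra.comul (R := k) (A := H)
local notation "ε" => Coalgebra.counit (R := k) (A := H)

lemma Wmap_eq {x : H} {ι : Type*} (r : Coalgebra.Repr k x ι) :
    Wmap k H x = ∑ p ∈ r.index, σ (r.right p) ⊗ₜ[k] σ (r.left p) := by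
  rw [Wmap, LinearMap.comp_apply, LinearMap.comp_apply, ← r.eq]
  simp

/-- The antipode is an anti-coalgebra morphism. -/
lemma antipode_comul_eq (a : H) : Δ (σ a) = Wmap k H a := by
  have h := cv_inv_unique (Δ) (ε) hD_comul hE1_comul hE2_comul
    (f := (Δ)) cv_W_comul cv_comul_comulAntipode
  exact (congrArg (fun f : H →ₗ[k] H ⊗[k] H => f a) h).symm
end Conclusions
open scoped TensorProduct

/-- The right adjoint action `(ad_r m) u = σ(m₍₁₎) * u * m₍₂₎`, as a linear map in `u`. -/
noncomputable def adR (k : Type*) {H : Type*} [Field k] [Ring H] [HopfAlgebra k H]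
    (m : H) : H →ₗ[k] H :=
  TensorProduct.lift
    (LinearMap.mk₂ k
      (fun a b => (LinearMap.mulLeft k (HopfAlgebra.antipode (R := k) a)).comp
        (LinearMap.mulRight k b))
      (fun a a' b => by ext x; simp [add_mul, mul_add])
      (fun c a b => by ext x; simp [smul_mul_assoc])
      (fun a b b' => by ext x; simp [mul_add])
      (fun c a b => by ext x; simp [mul_smul_comm]))
    (Coalgebra.comul (R := k) m)

/-- The left adjoint action `(ad_l m) u = m₍₁₎ * u * σ(m₍₂₎)`, as a linear map in `u`. -/
noncomputable def adL (k : Type*) {H : Type*} [Field k] [Ring H] [HopfAlgebra k H]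
    (m : H) : H →ₗ[k] H :=
  TensorProduct.lift
    (LinearMap.mk₂ k
      (fun a b => (LinearMap.mulLeft k a).comp
        (LinearMap.mulRight k (HopfAlgebra.antipode (R := k) b)))
      (fun a a' b => by ext x; simp [add_mul, mul_add])
      (fun c a b => by ext x; simp [smul_mul_assoc])
      (fun a b b' => by ext x; simp [mul_add])
      (fun c a b => by ext x; simp [mul_smul_comm]))
    (Coalgebra.comul (R := k) m)

/-- The left locally finite part `F_l(H)`. -/
def leftLocFin (k H : Type*) [Field k] [Ring H] [HopfAlgebra k H] : Set H :=
  {x : H | FiniteDimensional k (Submodule.span k (Set.range fun u : H => adL k u x))}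

/-- The right locally finite part `F_r(H)`. -/
def rightLocFin (k H : Type*) [Field k] [Ring H] [HopfAlgebra k H] : Set H :=
  {x : H | FiniteDimensional k (Submodule.span k (Set.range fun u : H => adR k u x))}

section AdLemmas
variable {k H : Type*} [Field k] [Ring H] [HopfAlgebra k H]

local notation "σ" => HopfAlgebra.antipode (R := k) (A := H)

lemma adR_apply_of_eq (m x : H) {ι : Type*} (s : Finset ι) (f g : ι → H)
    (h : Coalgebra.comul (R := k) m = ∑ i ∈ s, f i ⊗ₜ[k] g i) :
    adR k m x = ∑ i ∈ s, σ (f i) * (x * g i) := by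
  rw [adR, h]
  simp [LinearMap.sum_apply]

lemma adL_apply_of_eq (u x : H) {ι : Type*} (s : Finset ι) (f g : ι → H)
    (h : Coalgebra.comul (R := k) u = ∑ i ∈ s, f i ⊗ₜ[k] g i) :
    adL k u x = ∑ i ∈ s, f i * (x * σ (g i)) := by
  rw [adL, h]
  simp [LinearMap.sum_apply]

lemma adR_antipode (u x : H) : adR k (σ u) (σ x) = σ (adL k u x) := by
  classical
  set r := ℛ k u
  have hc : Coalgebra.comul (R := k) (σ u) =
      ∑ i ∈ r.index, σ (r.right i) ⊗ₜ[k] σ (r.left i) := by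
    rw [antipode_comul_eq, Wmap_eq r]
  rw [adR_apply_of_eq (σ u) (σ x) r.index _ _ hc,
    adL_apply_of_eq u x r.index r.left r.right r.eq.symm, map_sum]
  refine Finset.sum_congr rfl fun i _ => ?_
  rw [antipode_anti_mul, antipode_anti_mul, mul_assoc]

lemma range_adR_eq (σinv : H →ₗ[k] H)
    (hσ2 : ∀ x : H, σ (σinv x) = x) (x : H) :
    (Set.range fun m : H => adR k m (σ x)) =
      σ '' (Set.range fun u : H => adL k u x) := by
  ext y
  constructor
  · rintro ⟨m, rfl⟩
    exact ⟨adL k (σinv m) x, ⟨σinv m, rfl⟩, by rw [← adR_antipode, hσ2]⟩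
  · rintro ⟨-, ⟨u, rfl⟩, rfl⟩
    exact ⟨σ u, adR_antipode u x⟩

end AdLemmas

/-- For a Hopf algebra `H` with bijective antipode `σ` (with inverse `σinv`),
one has `F_r(H) = σ(F_l(H))`. -/
theorem rightLocFin_eq_antipode_image_leftLocFin
    (k H : Type*) [Field k] [Ring H] [HopfAlgebra k H]
    (σinv : H →ₗ[k] H)
    (hσ1 : ∀ x : H, σinv (HopfAlgebra.antipode (R := k) x) = x)
    (hσ2 : ∀ x : H, HopfAlgebra.antipode (R := k) (σinv x) = x) :
    rightLocFin k H = (HopfAlgebra.antipode (R := k) (A := H)) '' leftLocFin k H := by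
  have hinj : Function.Injective (HopfAlgebra.antipode (R := k) (A := H)) :=
    Function.LeftInverse.injective hσ1
  ext y
  simp only [rightLocFin, leftLocFin, Set.mem_image, Set.mem_setOf_eq]
  constructor
  · intro hy
    refine ⟨σinv y, ?_, hσ2 y⟩
    have hy' : FiniteDimensional k
        (Submodule.span k (Set.range fun m : H => adR k m
          (HopfAlgebra.antipode (R := k) (σinv y)))) := by
      rwa [hσ2]
    rw [range_adR_eq σinv hσ2 (σinv y), Submodule.span_image] at hy'
    exact Module.Finite.equiv
      (Submodule.equivMapOfInjective _ hinj
        (Submodule.span k (Set.range fun u : H => adL k u (σinv y)))).symm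
  · rintro ⟨x, hx, rfl⟩
    rw [range_adR_eq σinv hσ2 x, Submodule.span_image]
    exact Module.Finite.equiv
      (Submodule.equivMapOfInjective _ hinj
        (Submodule.span k (Set.range fun u : H => adL k u x)))
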